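/- Let s, k be natural numbers with 1 ≤ k ≤ s and s ≥ 2. Let (Ω, P) be a probability space and let A₀, …, A_{s−1} : Ω → Finset (Fin s) be mutually independent random variables such that each A_i is uniformly distributed over the k-element subsets of Fin s. For an element z ∈ Fin s, let L_z(ω) = |{i : z ∈ A_i(ω)}| be the number of indices i whose random subset contains z, and let L(ω) = max_z L_z(ω). Then P({ω : L(ω) > 2k + 4·ln s}) ≤ 1/s; equivalently, with probability at least 1 − 1/s, every element z is contained in at most 2k + 4·ln s of the random subsets. -/

import Mathlib

open MeasureTheory ProbabilityTheory
open scoped ENNReal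

/-- `Finset (Fin s)` carries the discrete σ-algebra. -/
instance (s : ℕ) : MeasurableSpace (Finset (Fin s)) := ⊤

lemma iIndepFun_congr_ae {ι Ω : Type*} [Countable ι] [MeasurableSpace Ω] {μ : Measure Ω}
    {β : ι → Type*} {m : ∀ i, MeasurableSpace (β i)} {f g : ∀ i, Ω → β i}
    (h : iIndepFun f μ) (hfg : ∀ i, f i =ᵐ[μ] g i) : iIndepFun g μ := by
  rw [iIndepFun_iff_measure_inter_preimage_eq_mul] at h ⊢
  intro S sets hsets
  have hae : ∀ᵐ ω ∂μ, ∀ i, f i ω = g i ω := ae_all_iff.2 hfg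
  have h2 : (⋂ i ∈ S, g i ⁻¹' sets i) =ᵐ[μ] (⋂ i ∈ S, f i ⁻¹' sets i) := by
    filter_upwards [hae] with ω hω
    show (ω ∈ ⋂ i ∈ S, g i ⁻¹' sets i) = (ω ∈ ⋂ i ∈ S, f i ⁻¹' sets i)
    simp only [Set.mem_iInter, Set.mem_preimage, hω]
  rw [measure_congr h2, h S hsets]
  refine Finset.prod_congr rfl fun i _ => measure_congr ?_
  filter_upwards [hfg i] with ω hω
  show (f i ω ∈ sets i) = (g i ω ∈ sets i)
  rw [hω]

lemma count_all (s k : ℕ) :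
    ((Finset.univ : Finset (Finset (Fin s))).filter fun B => B.card = k).card = s.choose k := by
  have : ((Finset.univ : Finset (Finset (Fin s))).filter fun B => B.card = k)
      = Finset.powersetCard k (Finset.univ : Finset (Fin s)) := by
    ext B
    simp [Finset.mem_powersetCard]
  rw [this, Finset.card_powersetCard, Finset.card_univ, Fintype.card_fin]

lemma count_mem (s k : ℕ) (hk1 : 1 ≤ k) (hks : k ≤ s) (z : Fin s) :
    (((Finset.univ : Finset (Finset (Fin s))).filter fun B => B.card = k).filter
      fun B => z ∈ B).card = (s - 1).choose (k - 1) := by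
  set C := ((Finset.univ : Finset (Finset (Fin s))).filter fun B => B.card = k)
  have hsplit := Finset.card_filter_add_card_filter_not (s := C)
    (p := fun B => z ∈ B)
  have hnot : (C.filter fun B => ¬ z ∈ B) = Finset.powersetCard k (Finset.univ.erase z) := by
    ext B
    simp only [C, Finset.mem_filter, Finset.mem_univ, true_and, Finset.mem_powersetCard]
    constructor
    · rintro ⟨hc, hz⟩
      exact ⟨fun x hx => Finset.mem_erase.2 ⟨fun h => hz (h ▸ hx), Finset.mem_univ x⟩, hc⟩
    · rintro ⟨hsub, hc⟩
      exact ⟨hc, fun hz => (Finset.mem_erase.1 (hsub hz)).1 rfl⟩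
  have hnotcard : (C.filter fun B => ¬ z ∈ B).card = (s - 1).choose k := by
    rw [hnot, Finset.card_powersetCard, Finset.card_erase_of_mem (Finset.mem_univ z),
      Finset.card_univ, Fintype.card_fin]
  have hC : C.card = s.choose k := count_all s k
  have hpascal : (s - 1).choose (k - 1) + (s - 1).choose k = s.choose k := by
    obtain ⟨s', rfl⟩ := Nat.exists_eq_add_of_le (le_trans hk1 hks)
    obtain ⟨k', rfl⟩ := Nat.exists_eq_add_of_le hk1
    simp [Nat.add_comm, Nat.choose_succ_succ]
  omega

/-- **Lemma V.4.** If each of `s` transactions independently chooses a uniformly random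
`k`-element subset of the `s` objects to access, then with probability at least
`1 − 1/s`, every object is accessed by at most `2k + 4·ln s` transactions. -/
theorem max_object_load_bound
    {Ω : Type} [MeasurableSpace Ω] (P : Measure Ω) [IsProbabilityMeasure P]
    (s k : ℕ) (hk1 : 1 ≤ k) (hks : k ≤ s) (hs : 2 ≤ s)
    (A : Fin s → Ω → Finset (Fin s))
    (hindep : iIndepFun A P)
    (hne : ((Finset.univ : Finset (Finset (Fin s))).filter fun B => B.card = k).Nonempty)
    (hunif : ∀ i : Fin s,
      Measure.map (A i) P = (PMF.uniformOfFinset _ hne).toMeasure) :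
    P {ω : Ω |
        (2 * (k : ℝ) + 4 * Real.log s) <
          ((Finset.univ.sup fun z : Fin s =>
            (Finset.univ.filter fun i : Fin s => z ∈ A i ω).card : ℕ) : ℝ)} ≤
      1 / (s : ℝ≥0∞) := by
  classical
  have hs0 : (0:ℝ) < s := by positivity
  have hsnat : 0 < s := by omega
  set a : ℝ := 2 * (k:ℝ) + 4 * Real.log s with ha_def
  -- A i is AEMeasurable
  have hAmeas : ∀ i, AEMeasurable (A i) P := by
    intro i
    by_contra h
    have h1 := hunif i
    rw [Measure.map_of_not_aemeasurable h] at h1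
    have h2 : ((PMF.uniformOfFinset _ hne).toMeasure) Set.univ = 1 := measure_univ
    rw [← h1] at h2
    simp at h2
  set A' : Fin s → Ω → Finset (Fin s) := fun i => (hAmeas i).mk (A i) with hA'def
  have hA'm : ∀ i, Measurable (A' i) := fun i => (hAmeas i).measurable_mk
  have hAe : ∀ i, A i =ᵐ[P] A' i := fun i => (hAmeas i).ae_eq_mk
  have hindep' : iIndepFun A' P := iIndepFun_congr_ae hindep hAe
  -- probability that z ∈ A' i
  have hp : ∀ i z, (P {ω | z ∈ A' i ω}).toReal = (k:ℝ)/s := by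
    intro i z
    have hmap : Measure.map (A' i) P = (PMF.uniformOfFinset _ hne).toMeasure := by
      rw [← Measure.map_congr (hAe i), hunif i]
    have h1 : P {ω | z ∈ A' i ω} = Measure.map (A' i) P {B | z ∈ B} := by
      rw [Measure.map_apply (hA'm i) MeasurableSpace.measurableSet_top]
      rfl
    rw [h1, hmap, PMF.toMeasure_uniformOfFinset_apply hne _ MeasurableSpace.measurableSet_top]
    have hcm : (Finset.filter (fun x => x ∈ {B : Finset (Fin s) | z ∈ B})
        (Finset.filter (fun B => B.card = k) Finset.univ)).card = (s-1).choose (k-1) := by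
      convert count_mem s k hk1 hks z using 3
      exact Iff.rfl
    rw [Finset.filter_congr_decidable, hcm, count_all s k]
    have hchoose : s * (s - 1).choose (k - 1) = s.choose k * k := by
      obtain ⟨k', rfl⟩ := Nat.exists_eq_add_of_le hk1
      obtain ⟨s', rfl⟩ := Nat.exists_eq_add_of_le hks
      have e1 : 1 + k' + s' - 1 = k' + s' := by omega
      have e2 : 1 + k' - 1 = k' := by omega
      rw [e1, e2, show 1 + k' + s' = k' + s' + 1 by omega, show 1 + k' = k' + 1 by omega]
      exact Nat.add_one_mul_choose_eq (k' + s') k'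
    have hck : 0 < s.choose k := Nat.choose_pos hks
    rw [ENNReal.toReal_div]
    simp only [ENNReal.toReal_natCast]
    rw [div_eq_div_iff (by positivity) (ne_of_gt hs0)]
    push_cast
    have := congrArg (fun n : ℕ => (n : ℝ)) hchoose
    push_cast at this
    linarith
  -- per-object Chernoff bound
  have hexp1 : Real.exp 1 ≤ 3 := le_trans Real.exp_one_lt_d9.le (by norm_num)
  have hlogs : 0 ≤ Real.log s := Real.log_nonneg (by exact_mod_cast Nat.one_le_iff_ne_zero.2 (by omega))
  have hper : ∀ z : Fin s,
      P {ω : Ω | a ≤ ((Finset.univ.filter fun i : Fin s => z ∈ A' i ω).card : ℝ)} ≤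
        ENNReal.ofReal (1/(s:ℝ)^2) := by
    intro z
    set X : Fin s → Ω → ℝ := fun i ω => if z ∈ A' i ω then 1 else 0 with hX
    have hSm : ∀ i, MeasurableSet {ω | z ∈ A' i ω} := by
      intro i
      show MeasurableSet (A' i ⁻¹' {B : Finset (Fin s) | z ∈ B})
      exact (hA'm i) MeasurableSpace.measurableSet_top
    have hXm : ∀ i, Measurable (X i) :=
      fun i => Measurable.ite (hSm i) measurable_const measurable_const
    have hXindep : iIndepFun X P :=
      hindep'.comp (fun _ B => if z ∈ B then (1:ℝ) else 0)
        (fun _ => measurable_from_top)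
    have hXind : ∀ i, X i = Set.indicator {ω | z ∈ A' i ω} (fun _ => (1:ℝ)) := by
      intro i; funext ω; by_cases h : z ∈ A' i ω <;> simp [hX, h, Set.indicator]
    have hXint : ∀ i, Integrable (X i) P := fun i => by
      rw [hXind i]; exact (integrable_const 1).indicator (hSm i)
    have hXexp_eq : ∀ i, (fun ω => Real.exp (1 * X i ω)) =
        fun ω => 1 + (Real.exp 1 - 1) * X i ω := by
      intro i; funext ω
      by_cases h : z ∈ A' i ω <;> simp [hX, h] <;> ring
    have hXexp_int : ∀ i, Integrable (fun ω => Real.exp (1 * X i ω)) P := fun i => by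
      rw [hXexp_eq i]; exact (integrable_const 1).add ((hXint i).const_mul _)
    have hXmean : ∀ i, ∫ ω, X i ω ∂P = (k:ℝ)/s := by
      intro i
      rw [hXind i, integral_indicator_const _ (hSm i), measureReal_def, hp i z]
      simp
    have hmgf1 : ∀ i, mgf (X i) P 1 = 1 + (Real.exp 1 - 1) * ((k:ℝ)/s) := by
      intro i
      rw [mgf, hXexp_eq i, integral_add (integrable_const 1) ((hXint i).const_mul _),
        integral_const, integral_const_mul, hXmean i]
      simp
    have hmgf_sum : mgf (∑ i : Fin s, X i) P 1 =
        (1 + (Real.exp 1 - 1) * ((k:ℝ)/s)) ^ s := by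
      rw [hXindep.mgf_sum hXm Finset.univ]
      simp [hmgf1]
    have hint_sum : Integrable (fun ω => Real.exp (1 * (∑ i : Fin s, X i) ω)) P :=
      hXindep.integrable_exp_mul_sum hXm (fun i _ => hXexp_int i)
    have hcher := measure_ge_le_exp_mul_mgf (μ := P) (X := ∑ i : Fin s, X i) a
      zero_le_one hint_sum
    rw [hmgf_sum] at hcher
    -- numeric bound
    have hbase : (0:ℝ) ≤ 1 + (Real.exp 1 - 1) * ((k:ℝ)/s) := by
      have h1 : (1:ℝ) ≤ Real.exp 1 := by
        nlinarith [Real.add_one_le_exp (1:ℝ), Real.exp_pos (1:ℝ)]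
      have h2 : (0:ℝ) ≤ (k:ℝ)/s := by positivity
      nlinarith
    have hmgf_le : (1 + (Real.exp 1 - 1) * ((k:ℝ)/s)) ^ s ≤
        Real.exp ((Real.exp 1 - 1) * k) := by
      have h1 : (1:ℝ) + (Real.exp 1 - 1) * ((k:ℝ)/s) ≤
          Real.exp ((Real.exp 1 - 1) * ((k:ℝ)/s)) := by
        rw [add_comm]
        exact Real.add_one_le_exp _
      calc (1 + (Real.exp 1 - 1) * ((k:ℝ)/s)) ^ s
          ≤ Real.exp ((Real.exp 1 - 1) * ((k:ℝ)/s)) ^ s := pow_le_pow_left₀ hbase h1 s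
        _ = Real.exp ((Real.exp 1 - 1) * ((k:ℝ)/s) * s) := by
            rw [← Real.exp_nat_mul]; ring_nf
        _ = Real.exp ((Real.exp 1 - 1) * k) := by
            congr 1; field_simp
    have hnum : Real.exp (-1 * a) * (1 + (Real.exp 1 - 1) * ((k:ℝ)/s)) ^ s ≤ 1/(s:ℝ)^2 := by
      calc Real.exp (-1 * a) * (1 + (Real.exp 1 - 1) * ((k:ℝ)/s)) ^ s
          ≤ Real.exp (-1 * a) * Real.exp ((Real.exp 1 - 1) * k) := by
            exact mul_le_mul_of_nonneg_left hmgf_le (Real.exp_pos _).le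
        _ = Real.exp ((Real.exp 1 - 3) * k - 4 * Real.log s) := by
            rw [← Real.exp_add]; congr 1; simp only [ha_def]; ring
        _ ≤ Real.exp (-(2 * Real.log s)) := by
            apply Real.exp_le_exp.2
            have hk0 : (0:ℝ) ≤ k := by positivity
            have : (Real.exp 1 - 3) * k ≤ 0 := mul_nonpos_of_nonpos_of_nonneg (by linarith) hk0
            nlinarith
        _ = 1/(s:ℝ)^2 := by
            rw [show -(2 * Real.log (s:ℝ)) = -(Real.log s + Real.log s) by ring,
              Real.exp_neg, Real.exp_add, Real.exp_log hs0, one_div]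
            congr 1; ring
    have hset : {ω : Ω | a ≤ ((Finset.univ.filter fun i : Fin s => z ∈ A' i ω).card : ℝ)} =
        {ω : Ω | a ≤ (∑ i : Fin s, X i) ω} := by
      ext ω
      simp only [Set.mem_setOf_eq, Finset.sum_apply, hX, Finset.sum_boole]
    rw [hset]
    refine (ENNReal.le_ofReal_iff_toReal_le (measure_ne_top P _) (by positivity)).2 ?_
    exact le_trans hcher hnum
  -- union bound
  have hEe : P {ω : Ω | a < ((Finset.univ.sup fun z : Fin s =>
        (Finset.univ.filter fun i : Fin s => z ∈ A i ω).card : ℕ) : ℝ)} =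
      P {ω : Ω | a < ((Finset.univ.sup fun z : Fin s =>
        (Finset.univ.filter fun i : Fin s => z ∈ A' i ω).card : ℕ) : ℝ)} := by
    apply measure_congr
    have hae : ∀ᵐ ω ∂P, ∀ i, A i ω = A' i ω := ae_all_iff.2 hAe
    filter_upwards [hae] with ω hω
    show (a < ((Finset.univ.sup fun z : Fin s =>
        (Finset.univ.filter fun i : Fin s => z ∈ A i ω).card : ℕ) : ℝ)) =
      (a < ((Finset.univ.sup fun z : Fin s =>
        (Finset.univ.filter fun i : Fin s => z ∈ A' i ω).card : ℕ) : ℝ))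
    simp only [hω]
  rw [hEe]
  have hsub : {ω : Ω | a < ((Finset.univ.sup fun z : Fin s =>
        (Finset.univ.filter fun i : Fin s => z ∈ A' i ω).card : ℕ) : ℝ)} ⊆
      ⋃ z : Fin s, {ω : Ω | a ≤ ((Finset.univ.filter fun i : Fin s => z ∈ A' i ω).card : ℝ)} := by
    intro ω hω
    have hnon : (Finset.univ : Finset (Fin s)).Nonempty := ⟨⟨0, hsnat⟩, Finset.mem_univ _⟩
    obtain ⟨z, _, hz⟩ := Finset.exists_mem_eq_sup (Finset.univ : Finset (Fin s)) hnon
      (fun z => (Finset.univ.filter fun i : Fin s => z ∈ A' i ω).card)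
    refine Set.mem_iUnion.2 ⟨z, ?_⟩
    have := hω
    simp only [Set.mem_setOf_eq] at this ⊢
    rw [hz] at this
    exact this.le
  calc P _ ≤ P (⋃ z : Fin s, {ω : Ω |
        a ≤ ((Finset.univ.filter fun i : Fin s => z ∈ A' i ω).card : ℝ)}) := measure_mono hsub
    _ ≤ ∑' z : Fin s, P {ω : Ω |
        a ≤ ((Finset.univ.filter fun i : Fin s => z ∈ A' i ω).card : ℝ)} := measure_iUnion_le _
    _ ≤ ∑' _ : Fin s, ENNReal.ofReal (1/(s:ℝ)^2) := ENNReal.tsum_le_tsum (fun z => hper z)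
    _ = (s : ℝ≥0∞) * ENNReal.ofReal (1/(s:ℝ)^2) := by
        rw [tsum_fintype]
        simp [Finset.card_univ, mul_comm]
    _ = 1 / (s : ℝ≥0∞) := by
        rw [show ((s:ℝ≥0∞)) = ENNReal.ofReal (s:ℝ) by rw [ENNReal.ofReal_natCast],
          ← ENNReal.ofReal_mul (by positivity)]
        rw [show (s:ℝ) * (1/(s:ℝ)^2) = 1/(s:ℝ) by field_simp]
        rw [one_div, one_div, ENNReal.ofReal_inv_of_pos hs0, ENNReal.ofReal_natCast]
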